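/- Let n ≥ 3 be odd and let V_n be the vertex set of the regular n-gon inscribed in the unit circle centered at the origin. Then every intersecting family of triangles spanned by V_n has size at most the number of 3-element subsets of V_n whose convex hull contains the origin in its interior. -/

import Mathlib

open Real

/-- The vertex set of the regular `n`-gon inscribed in the unit circle centered at the
origin: the points `(cos(2πk/n), sin(2πk/n))` for `k = 0, 1, ..., n-1`. -/
noncomputable def regularNgon (n : ℕ) : Finset (ℝ × ℝ) :=
  (Finset.range n).image
    (fun k : ℕ => (Real.cos (2 * Real.pi * k / n), Real.sin (2 * Real.pi * k / n)))

namespace NgonProofAux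

noncomputable def P (θ : ℝ) : ℝ × ℝ := (Real.cos θ, Real.sin θ)

lemma tri_id (x y : ℝ) :
    Real.sin (2*x) + Real.sin (2*y) - Real.sin (2*x + 2*y)
      = 4 * Real.sin x * Real.sin y * Real.sin (x+y) := by
  rw [Real.sin_add (2*x) (2*y), Real.sin_two_mul, Real.sin_two_mul,
    Real.cos_two_mul', Real.cos_two_mul', Real.sin_add x y]
  linear_combination (-2*Real.sin x*Real.cos x) * (Real.sin_sq_add_cos_sq y) + (-2*Real.sin y*Real.cos y) * (Real.sin_sq_add_cos_sq x)

lemma P_inj {x y : ℝ} (h : P x = P y) : ∃ k : ℤ, x - y = 2*π*k := by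
  have hc : Real.cos x = Real.cos y := congrArg Prod.fst h
  have hs : Real.sin x = Real.sin y := congrArg Prod.snd h
  have he : Complex.exp (x * Complex.I) = Complex.exp (y * Complex.I) := by
    rw [Complex.exp_mul_I, Complex.exp_mul_I, ← Complex.ofReal_cos, ← Complex.ofReal_cos,
      ← Complex.ofReal_sin, ← Complex.ofReal_sin, hc, hs]
  rcases Complex.exp_eq_exp_iff_exists_int.1 he with ⟨k, hk⟩
  refine ⟨k, ?_⟩
  have h2 : (x : ℂ) * Complex.I = ((y + 2*π*k : ℝ) : ℂ) * Complex.I := by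
    rw [hk]; push_cast; ring
  have h3 := mul_right_cancel₀ Complex.I_ne_zero h2
  have h4 : x = y + 2*π*k := by exact_mod_cast h3
  linarith


lemma tri_id' (a b : ℝ) :
    Real.sin a + Real.sin b - Real.sin (a + b)
      = 4 * Real.sin (a/2) * Real.sin (b/2) * Real.sin ((a+b)/2) := by
  have h := tri_id (a/2) (b/2)
  rw [show 2*(a/2) = a by ring] at h
  rw [show 2*(b/2) = b by ring] at h
  rw [show a/2 + b/2 = (a+b)/2 by ring] at h
  exact h

lemma g_eval (α β γ : ℝ) :
    (Real.sin β - Real.sin α) * (P γ).1 + (Real.cos α - Real.cos β) * (P γ).2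
      - Real.sin (β - α)
    = 4 * Real.sin ((β-γ)/2) * Real.sin ((γ-α)/2) * Real.sin ((β-α)/2) := by
  have h := tri_id' (β - γ) (γ - α)
  rw [show β - γ + (γ - α) = β - α by ring] at h
  rw [← h, Real.sin_sub β γ, Real.sin_sub γ α]
  simp only [P]
  ring

set_option maxHeartbeats 1000000 in
lemma sep {α β : ℝ} (h1 : 0 < β - α) (h2 : β - α < 2*π) {A B : Set (ℝ×ℝ)}
    (hA : ∀ p ∈ A, ∃ γ, α ≤ γ ∧ γ ≤ β ∧ p = P γ)
    (hB : ∀ p ∈ B, ∃ γ, β ≤ γ ∧ γ ≤ α + 2*π ∧ p = P γ) :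
    interior (convexHull ℝ A) ∩ interior (convexHull ℝ B) = ∅ := by
  have hπ := Real.pi_pos
  have lin : IsLinearMap ℝ (fun p : ℝ × ℝ =>
      (Real.sin β - Real.sin α) * p.1 + (Real.cos α - Real.cos β) * p.2) := by
    constructor
    · intro p q; simp; ring
    · intro r p; simp; ring
  have hs3 : 0 < Real.sin ((β - α)/2) :=
    Real.sin_pos_of_pos_of_lt_pi (by linarith) (by linarith)
  have hApos : A ⊆ {p | Real.sin (β - α) ≤
      (Real.sin β - Real.sin α) * p.1 + (Real.cos α - Real.cos β) * p.2} := by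
    intro p hp
    rcases hA p hp with ⟨γ, hγ1, hγ2, rfl⟩
    have e := g_eval α β γ
    have f1 : 0 ≤ Real.sin ((β-γ)/2) :=
      Real.sin_nonneg_of_nonneg_of_le_pi (by linarith) (by linarith)
    have f2 : 0 ≤ Real.sin ((γ-α)/2) :=
      Real.sin_nonneg_of_nonneg_of_le_pi (by linarith) (by linarith)
    have h4 : 0 ≤ 4 * Real.sin ((β-γ)/2) * Real.sin ((γ-α)/2) * Real.sin ((β-α)/2) := by
      positivity
    simp only [Set.mem_setOf_eq]
    linarith
  have hBneg : B ⊆ {p | (Real.sin β - Real.sin α) * p.1 + (Real.cos α - Real.cos β) * p.2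
      ≤ Real.sin (β - α)} := by
    intro p hp
    rcases hB p hp with ⟨γ, hγ1, hγ2, rfl⟩
    have e := g_eval α β γ
    have f1 : Real.sin ((β-γ)/2) ≤ 0 :=
      Real.sin_nonpos_of_nonpos_of_neg_pi_le (by linarith) (by linarith)
    have f2 : 0 ≤ Real.sin ((γ-α)/2) :=
      Real.sin_nonneg_of_nonneg_of_le_pi (by linarith) (by linarith)
    have h4 : 4 * Real.sin ((β-γ)/2) * Real.sin ((γ-α)/2) * Real.sin ((β-α)/2) ≤ 0 := by
      have f1' : 0 ≤ - Real.sin ((β-γ)/2) := by linarith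
      have t1 : 0 ≤ (- Real.sin ((β-γ)/2)) * Real.sin ((γ-α)/2) := mul_nonneg f1' f2
      have t2 : 0 ≤ ((- Real.sin ((β-γ)/2)) * Real.sin ((γ-α)/2)) * Real.sin ((β-α)/2) :=
        mul_nonneg t1 (le_of_lt hs3)
      nlinarith [t2]
    simp only [Set.mem_setOf_eq]
    linarith
  have hullA := convexHull_min hApos (convex_halfSpace_ge lin (Real.sin (β - α)))
  have hullB := convexHull_min hBneg (convex_halfSpace_le lin (Real.sin (β - α)))
  have hab : (Real.sin β - Real.sin α) ≠ 0 ∨ (Real.cos α - Real.cos β) ≠ 0 := by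
    by_contra hcon
    push_neg at hcon
    have hPab : P α = P β := by
      simp only [P, Prod.mk.injEq]
      constructor
      · have := hcon.2; linarith
      · have := hcon.1; linarith
    rcases P_inj hPab with ⟨k, hk⟩
    have hk1 : (0:ℝ) < -(k:ℝ) := by nlinarith
    have hk2 : (-(k:ℝ)) < 1 := by nlinarith
    have hk1' : (0:ℤ) < -k := by exact_mod_cast hk1
    have hk2' : (-k:ℤ) < 1 := by exact_mod_cast hk2
    omega
  have habsq : 0 < (Real.sin β - Real.sin α)^2 + (Real.cos α - Real.cos β)^2 := by
    rcases hab with h | h <;> positivity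
  ext x
  simp only [Set.mem_inter_iff, Set.mem_empty_iff_false, iff_false, not_and]
  intro hxA hxB
  have hx1 : x ∈ interior ({p : ℝ × ℝ | Real.sin (β - α) ≤
        (Real.sin β - Real.sin α) * p.1 + (Real.cos α - Real.cos β) * p.2}
      ∩ {p : ℝ × ℝ | (Real.sin β - Real.sin α) * p.1 + (Real.cos α - Real.cos β) * p.2
        ≤ Real.sin (β - α)}) := by
    rw [interior_inter]
    exact ⟨interior_mono hullA hxA, interior_mono hullB hxB⟩
  rw [mem_interior_iff_mem_nhds, Metric.mem_nhds_iff] at hx1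
  rcases hx1 with ⟨ε, hε, hball⟩
  set δ := ε / (2 * (|Real.sin β - Real.sin α| + |Real.cos α - Real.cos β| + 1)) with hδ
  have hδpos : 0 < δ := by positivity
  set y : ℝ × ℝ := (x.1 + δ * (Real.sin β - Real.sin α),
    x.2 + δ * (Real.cos α - Real.cos β)) with hy
  have hyball : y ∈ Metric.ball x ε := by
    rw [Metric.mem_ball, Prod.dist_eq]
    have d1 : dist y.1 x.1 = δ * |Real.sin β - Real.sin α| := by
      rw [Real.dist_eq]; simp [hy, abs_mul, abs_of_pos hδpos]
    have d2 : dist y.2 x.2 = δ * |Real.cos α - Real.cos β| := by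
      rw [Real.dist_eq]; simp [hy, abs_mul, abs_of_pos hδpos]
    rw [d1, d2]
    have h1 : δ * |Real.sin β - Real.sin α| < ε := by
      rw [hδ, div_mul_eq_mul_div, div_lt_iff₀ (by positivity)]
      nlinarith [abs_nonneg (Real.sin β - Real.sin α), abs_nonneg (Real.cos α - Real.cos β)]
    have h2 : δ * |Real.cos α - Real.cos β| < ε := by
      rw [hδ, div_mul_eq_mul_div, div_lt_iff₀ (by positivity)]
      nlinarith [abs_nonneg (Real.sin β - Real.sin α), abs_nonneg (Real.cos α - Real.cos β)]
    exact max_lt h1 h2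
  have hymem := hball hyball
  have hxmem := hball (Metric.mem_ball_self hε)
  have hfy : (Real.sin β - Real.sin α) * y.1 + (Real.cos α - Real.cos β) * y.2
      = (Real.sin β - Real.sin α) * x.1 + (Real.cos α - Real.cos β) * x.2
        + δ * ((Real.sin β - Real.sin α)^2 + (Real.cos α - Real.cos β)^2) := by
    simp only [hy]; ring
  have hpos := mul_pos hδpos habsq
  have e1 := hymem.1
  have e2 := hymem.2
  have e3 := hxmem.1
  have e4 := hxmem.2
  simp only [Set.mem_setOf_eq] at e1 e2 e3 e4
  linarith


lemma cross_P (a b : ℝ) : (P a).1 * (P b).2 - (P a).2 * (P b).1 = Real.sin (b - a) := by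
  simp only [P, Real.sin_sub]
  ring

set_option maxHeartbeats 1000000 in
lemma zero_mem_interior {α g₁ g₂ : ℝ} (h₁ : 0 < g₁) (h₁' : g₁ < π)
    (h₂ : 0 < g₂) (h₂' : g₂ < π) (h₃ : π < g₁ + g₂) (h₃' : g₁ + g₂ < 2*π) :
    ((0,0) : ℝ×ℝ) ∈ interior (convexHull ℝ {P α, P (α+g₁), P (α+g₁+g₂)}) := by
  have hπ := Real.pi_pos
  set v₀ := P α with hv₀
  set v₁ := P (α+g₁) with hv₁
  set v₂ := P (α+g₁+g₂) with hv₂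
  -- numerators
  set N₀ : ℝ × ℝ → ℝ := fun x => (v₁.1 - x.1) * (v₂.2 - x.2) - (v₁.2 - x.2) * (v₂.1 - x.1)
    with hN₀
  set N₁ : ℝ × ℝ → ℝ := fun x => (v₂.1 - x.1) * (v₀.2 - x.2) - (v₂.2 - x.2) * (v₀.1 - x.1)
    with hN₁
  set N₂ : ℝ × ℝ → ℝ := fun x => (v₀.1 - x.1) * (v₁.2 - x.2) - (v₀.2 - x.2) * (v₁.1 - x.1)
    with hN₂
  have c01 : v₀.1 * v₁.2 - v₀.2 * v₁.1 = Real.sin g₁ := by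
    rw [hv₀, hv₁, cross_P α (α+g₁), show α + g₁ - α = g₁ by ring]
  have c12 : v₁.1 * v₂.2 - v₁.2 * v₂.1 = Real.sin g₂ := by
    rw [hv₁, hv₂, cross_P (α+g₁) (α+g₁+g₂), show α + g₁ + g₂ - (α+g₁) = g₂ by ring]
  have c20 : v₂.1 * v₀.2 - v₂.2 * v₀.1 = - Real.sin (g₁+g₂) := by
    rw [hv₂, hv₀, cross_P (α+g₁+g₂) α, show α - (α+g₁+g₂) = -(g₁+g₂) by ring, Real.sin_neg]
  -- positivity of numerators at 0
  have hs1 : 0 < Real.sin g₁ := Real.sin_pos_of_pos_of_lt_pi h₁ h₁'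
  have hs2 : 0 < Real.sin g₂ := Real.sin_pos_of_pos_of_lt_pi h₂ h₂'
  have hs12 : Real.sin (g₁+g₂) < 0 := by
    have : 0 < Real.sin (g₁ + g₂ - π) :=
      Real.sin_pos_of_pos_of_lt_pi (by linarith) (by linarith)
    rw [Real.sin_sub_pi] at this
    linarith
  have hD : N₀ 0 + N₁ 0 + N₂ 0
      = Real.sin g₁ + Real.sin g₂ + (- Real.sin (g₁+g₂)) := by
    simp only [hN₀, hN₁, hN₂]
    simp only [Prod.fst_zero, Prod.snd_zero, sub_zero]
    linarith [c01, c12, c20]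
  have hDpos : 0 < N₀ 0 + N₁ 0 + N₂ 0 := by rw [hD]; linarith
  set D := N₀ 0 + N₁ 0 + N₂ 0 with hDdef
  -- identities
  have I1 : ∀ x : ℝ × ℝ, N₀ x + N₁ x + N₂ x = D := by
    intro x
    simp only [hDdef, hN₀, hN₁, hN₂, Prod.fst_zero, Prod.snd_zero, sub_zero]
    ring
  have I2a : ∀ x : ℝ × ℝ, N₀ x * v₀.1 + N₁ x * v₁.1 + N₂ x * v₂.1 = D * x.1 := by
    intro x
    simp only [hDdef, hN₀, hN₁, hN₂, Prod.fst_zero, Prod.snd_zero, sub_zero]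
    ring
  have I2b : ∀ x : ℝ × ℝ, N₀ x * v₀.2 + N₁ x * v₁.2 + N₂ x * v₂.2 = D * x.2 := by
    intro x
    simp only [hDdef, hN₀, hN₁, hN₂, Prod.fst_zero, Prod.snd_zero, sub_zero]
    ring
  -- bounds on vertex coords
  have hb : ∀ θ : ℝ, |(P θ).1| ≤ 1 ∧ |(P θ).2| ≤ 1 := by
    intro θ
    exact ⟨Real.abs_cos_le_one θ, Real.abs_sin_le_one θ⟩
  -- Lipschitz-type bound
  have lip : ∀ (w u : ℝ × ℝ) (x : ℝ × ℝ), |w.1| ≤ 1 → |w.2| ≤ 1 → |u.1| ≤ 1 → |u.2| ≤ 1 →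
      |((w.1 - x.1) * (u.2 - x.2) - (w.2 - x.2) * (u.1 - x.1))
        - (w.1 * u.2 - w.2 * u.1)| ≤ 2*|x.1| + 2*|x.2| := by
    intro w u x hw1 hw2 hu1 hu2
    have e : ((w.1 - x.1) * (u.2 - x.2) - (w.2 - x.2) * (u.1 - x.1))
        - (w.1 * u.2 - w.2 * u.1) = x.1 * (w.2 - u.2) + x.2 * (u.1 - w.1) := by ring
    rw [e]
    calc |x.1 * (w.2 - u.2) + x.2 * (u.1 - w.1)|
        ≤ |x.1 * (w.2 - u.2)| + |x.2 * (u.1 - w.1)| := abs_add_le _ _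
      _ ≤ |x.1| * 2 + |x.2| * 2 := by
          gcongr ?_ + ?_ <;> rw [abs_mul]
          · have : |w.2 - u.2| ≤ 2 := by
              calc |w.2 - u.2| ≤ |w.2| + |u.2| := abs_sub _ _
                _ ≤ 2 := by linarith
            exact mul_le_mul_of_nonneg_left this (abs_nonneg _)
          · have : |u.1 - w.1| ≤ 2 := by
              calc |u.1 - w.1| ≤ |u.1| + |w.1| := abs_sub _ _
                _ ≤ 2 := by linarith
            exact mul_le_mul_of_nonneg_left this (abs_nonneg _)
      _ = 2*|x.1| + 2*|x.2| := by ring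
  have hN00 : N₀ 0 = Real.sin g₂ := by
    simp only [hN₀, Prod.fst_zero, Prod.snd_zero, sub_zero]; exact c12
  have hN10 : N₁ 0 = - Real.sin (g₁+g₂) := by
    simp only [hN₁, Prod.fst_zero, Prod.snd_zero, sub_zero]; exact c20
  have hN20 : N₂ 0 = Real.sin g₁ := by
    simp only [hN₂, Prod.fst_zero, Prod.snd_zero, sub_zero]; exact c01
  have hN00p : 0 < N₀ 0 := by rw [hN00]; linarith
  have hN10p : 0 < N₁ 0 := by rw [hN10]; linarith
  have hN20p : 0 < N₂ 0 := by rw [hN20]; linarith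
  set ε := min (N₀ 0) (min (N₁ 0) (N₂ 0)) / 5 with hε
  have hεpos : 0 < ε := by
    have := lt_min hN00p (lt_min hN10p hN20p)
    positivity
  have hDne : D ≠ 0 := ne_of_gt hDpos
  have hsub : Metric.ball ((0,0) : ℝ×ℝ) ε ⊆ convexHull ℝ {v₀, v₁, v₂} := by
    intro x hx
    rw [Metric.mem_ball, Prod.dist_eq] at hx
    have hx1 : |x.1| < ε := by
      have h1 := le_max_left (dist x.1 ((0,0):ℝ×ℝ).1) (dist x.2 ((0,0):ℝ×ℝ).2)
      have h2 := lt_of_le_of_lt h1 hx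
      simpa [Real.dist_eq] using h2
    have hx2 : |x.2| < ε := by
      have h1 := le_max_right (dist x.1 ((0,0):ℝ×ℝ).1) (dist x.2 ((0,0):ℝ×ℝ).2)
      have h2 := lt_of_le_of_lt h1 hx
      simpa [Real.dist_eq] using h2
    -- each numerator stays positive
    have hε5 : 5 * ε = min (N₀ 0) (min (N₁ 0) (N₂ 0)) := by rw [hε]; ring
    have hmin0 : 5 * ε ≤ N₀ 0 := by
      have := min_le_left (N₀ 0) (min (N₁ 0) (N₂ 0)); linarith
    have hmin1 : 5 * ε ≤ N₁ 0 := by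
      have h1 := min_le_right (N₀ 0) (min (N₁ 0) (N₂ 0))
      have h2 := min_le_left (N₁ 0) (N₂ 0); linarith
    have hmin2 : 5 * ε ≤ N₂ 0 := by
      have h1 := min_le_right (N₀ 0) (min (N₁ 0) (N₂ 0))
      have h2 := min_le_right (N₁ 0) (N₂ 0); linarith
    have hv₀b := hb α
    have hv₁b := hb (α+g₁)
    have hv₂b := hb (α+g₁+g₂)
    rw [← hv₀] at hv₀b
    rw [← hv₁] at hv₁b
    rw [← hv₂] at hv₂b
    have lipb0 : |N₀ x - N₀ 0| ≤ 2*|x.1| + 2*|x.2| := by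
      have h := lip v₁ v₂ x hv₁b.1 hv₁b.2 hv₂b.1 hv₂b.2
      rw [c12] at h
      rw [hN00]
      simp only [hN₀]
      exact h
    have lipb1 : |N₁ x - N₁ 0| ≤ 2*|x.1| + 2*|x.2| := by
      have h := lip v₂ v₀ x hv₂b.1 hv₂b.2 hv₀b.1 hv₀b.2
      rw [c20] at h
      rw [hN10]
      simp only [hN₁]
      exact h
    have lipb2 : |N₂ x - N₂ 0| ≤ 2*|x.1| + 2*|x.2| := by
      have h := lip v₀ v₁ x hv₀b.1 hv₀b.2 hv₁b.1 hv₁b.2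
      rw [c01] at h
      rw [hN20]
      simp only [hN₂]
      exact h
    have hp0 : 0 < N₀ x := by
      have := abs_le.1 lipb0
      linarith
    have hp1 : 0 < N₁ x := by
      have := abs_le.1 lipb1
      linarith
    have hp2 : 0 < N₂ x := by
      have := abs_le.1 lipb2
      linarith
    -- x is a convex combination
    have hxeq : x = ∑ i : Fin 3, (![N₀ x / D, N₁ x / D, N₂ x / D] i) • (![v₀, v₁, v₂] i) := by
      rw [Fin.sum_univ_three]
      simp only [Matrix.cons_val_zero, Matrix.cons_val_one, Matrix.head_cons,
        Matrix.cons_val_two, Matrix.tail_cons]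
      have e1 := I2a x
      have e2 := I2b x
      apply Prod.ext
      · simp only [Prod.fst_add, Prod.smul_fst, smul_eq_mul]
        field_simp
        linarith [e1]
      · simp only [Prod.snd_add, Prod.smul_snd, smul_eq_mul]
        field_simp
        linarith [e2]
    rw [hxeq]
    apply Convex.sum_mem (convex_convexHull ℝ _)
    · intro i _
      fin_cases i <;> simp <;> positivity
    · rw [Fin.sum_univ_three]
      simp only [Matrix.cons_val_zero, Matrix.cons_val_one, Matrix.head_cons,
        Matrix.cons_val_two, Matrix.tail_cons]
      field_simp
      linarith [I1 x]
    · intro i _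
      apply subset_convexHull
      fin_cases i <;> simp
  exact mem_interior.2 ⟨Metric.ball ((0,0) : ℝ×ℝ) ε, hsub, Metric.isOpen_ball,
    Metric.mem_ball_self hεpos⟩


noncomputable def pt (n k : ℕ) : ℝ × ℝ := P (2*π*k/n)

lemma pt_period (n k : ℕ) : pt n (k + n) = pt n k := by
  rcases Nat.eq_zero_or_pos n with h | h
  · subst h; simp [pt]
  unfold pt P
  have hn : (n:ℝ) ≠ 0 := Nat.cast_ne_zero.2 h.ne'
  have e : 2*π*((k:ℕ)+(n:ℕ) : ℕ)/n = 2*π*k/n + 2*π := by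
    push_cast
    field_simp
  rw [e, Real.cos_add_two_pi, Real.sin_add_two_pi]

lemma pt_add_mul (n k t : ℕ) : pt n (k + t*n) = pt n k := by
  induction t with
  | zero => simp
  | succ t ih =>
    have : k + (t+1)*n = (k + t*n) + n := by ring
    rw [this, pt_period, ih]

lemma pt_eq_iff {n : ℕ} (hn : 0 < n) (j k : ℕ) :
    pt n j = pt n k ↔ (n:ℤ) ∣ (j:ℤ) - k := by
  have hnR : (n:ℝ) ≠ 0 := Nat.cast_ne_zero.2 hn.ne'
  have hπ := Real.pi_ne_zero
  constructor
  · intro h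
    rcases P_inj h with ⟨z, hz⟩
    refine ⟨z, ?_⟩
    have : (2*π*j/n - 2*π*k/n) = 2*π*z := hz
    have h2 : ((j:ℝ) - k) = n * z := by
      field_simp at this
      nlinarith [Real.pi_pos, this]
    exact_mod_cast h2
  · intro ⟨z, hz⟩
    rcases le_total j k with hjk | hjk
    · have h0 : (0:ℤ) ≤ n * (-z) := by
        have : (k:ℤ) - j = n * (-z) := by linarith
        omega
      have hznn : 0 ≤ -z := by
        by_contra hc
        push_neg at hc
        have : -z ≤ -1 := by omega
        nlinarith [hn]
      have hk : k = j + (-z).toNat * n := by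
        have h1 : (k:ℤ) = j + ((-z).toNat : ℤ) * n := by
          rw [Int.toNat_of_nonneg hznn]; linarith
        exact_mod_cast h1
      rw [hk, pt_add_mul]
    · have h0 : (0:ℤ) ≤ n * z := by omega
      have hznn : 0 ≤ z := by
        by_contra hc
        push_neg at hc
        have : z ≤ -1 := by omega
        nlinarith [hn]
      have hj : j = k + z.toNat * n := by
        have h1 : (j:ℤ) = k + (z.toNat : ℤ) * n := by
          rw [Int.toNat_of_nonneg hznn]; linarith
        exact_mod_cast h1
      rw [hj, pt_add_mul]

lemma exists_ordered_triple (K : Finset ℕ) (h : K.card = 3) :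
    ∃ a b c : ℕ, a < b ∧ b < c ∧ K = {a, b, c} := by
  rcases Finset.card_eq_three.1 h with ⟨x, y, z, hxy, hxz, hyz, rfl⟩
  rcases lt_trichotomy x y with h1 | h1 | h1
  · rcases lt_trichotomy y z with h2 | h2 | h2
    · exact ⟨x, y, z, h1, h2, rfl⟩
    · exact absurd h2 hyz
    · rcases lt_trichotomy x z with h3 | h3 | h3
      · exact ⟨x, z, y, h3, h2, by ext w; simp; tauto⟩
      · exact absurd h3 hxz
      · exact ⟨z, x, y, h3, h1, by ext w; simp; tauto⟩
  · exact absurd h1 hxy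
  · rcases lt_trichotomy x z with h2 | h2 | h2
    · exact ⟨y, x, z, h1, h2, by ext w; simp; tauto⟩
    · exact absurd h2 hxz
    · rcases lt_trichotomy y z with h3 | h3 | h3
      · exact ⟨y, z, x, h3, h2, by ext w; simp; tauto⟩
      · exact absurd h3 hyz
      · exact ⟨z, y, x, h3, h1, by ext w; simp; tauto⟩


-- ### real part starts here
lemma pt_eq_of_dvd {n : ℕ} (hn : 0 < n) {x y : ℕ} (h : (n:ℤ) ∣ (x:ℤ) - y) :
    pt n x = pt n y := (pt_eq_iff hn x y).2 h

lemma dvd_eq_of_bounds {n x y : ℤ} (hn : 0 < n) (h : n ∣ x - y)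
    (h1 : -n < x - y) (h2 : x - y < n) : x = y := by
  rcases h with ⟨k, hk⟩
  have hk1 : ¬ 1 ≤ k := by intro hc; nlinarith
  have hk2 : ¬ k ≤ -1 := by intro hc; nlinarith
  have hk0 : k = 0 := by omega
  rw [hk0, mul_zero] at hk
  omega

lemma dvd_eq_n_of_bounds {n x : ℤ} (hn : 0 < n) (h : n ∣ x)
    (h1 : 0 < x) (h2 : x < 2*n) : x = n := by
  rcases h with ⟨k, hk⟩
  have hk1 : ¬ k ≤ 0 := by intro hc; nlinarith
  have hk2 : ¬ 2 ≤ k := by intro hc; nlinarith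
  have hk0 : k = 1 := by omega
  rw [hk0, mul_one] at hk
  omega

lemma theta_mono {n x y : ℕ} (h : x ≤ y) : 2*π*(x:ℝ)/n ≤ 2*π*(y:ℝ)/n := by
  rcases Nat.eq_zero_or_pos n with h0 | h0
  · subst h0; simp
  have hπ := Real.pi_pos
  have hx : (x:ℝ) ≤ y := Nat.cast_le.2 h
  have hn : (0:ℝ) < n := Nat.cast_pos.2 h0
  gcongr

lemma pt_mem_ngon {n : ℕ} (hn : 0 < n) (x : ℕ) : pt n x ∈ regularNgon n := by
  have hx : x % n < n := Nat.mod_lt _ hn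
  have : pt n x = pt n (x % n) := by
    conv_lhs => rw [show x = x % n + (x / n) * n by
      rw [Nat.mod_add_div' x n]]
    exact pt_add_mul n (x % n) (x / n)
  rw [this]
  unfold regularNgon
  rw [Finset.mem_image]
  exact ⟨x % n, Finset.mem_range.2 hx, rfl⟩

/-- interiors of convex hulls of two inscribed polygons on complementary arcs
are disjoint -/
lemma disj_of_arcs {n : ℕ} (hn : 0 < n) (T T' : Finset (ℝ×ℝ)) (u s : ℕ)
    (hs : 0 < s) (hsn : s < n)
    (hT : ∀ p ∈ T, ∃ x : ℕ, u ≤ x ∧ x ≤ u + s ∧ p = pt n x)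
    (hT' : ∀ p ∈ T', ∃ x : ℕ, u + s ≤ x ∧ x ≤ u + n ∧ p = pt n x) :
    interior (convexHull ℝ (T : Set (ℝ×ℝ))) ∩ interior (convexHull ℝ (T' : Set (ℝ×ℝ))) = ∅ := by
  have hπ := Real.pi_pos
  have hnR : (0:ℝ) < n := Nat.cast_pos.2 hn
  have hβα : 2*π*((u+s:ℕ):ℝ)/n - 2*π*(u:ℝ)/n = 2*π*(s:ℝ)/n := by
    push_cast; field_simp; ring
  have h2π : 2*π*((u+n:ℕ):ℝ)/n = 2*π*(u:ℝ)/n + 2*π := by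
    push_cast; field_simp
  apply sep (α := 2*π*(u:ℝ)/n) (β := 2*π*((u+s:ℕ):ℝ)/n)
  · rw [hβα]
    have : (0:ℝ) < s := Nat.cast_pos.2 hs
    positivity
  · rw [hβα, div_lt_iff₀ hnR]
    have : (s:ℝ) < n := Nat.cast_lt.2 hsn
    nlinarith
  · intro p hp
    rcases hT p hp with ⟨x, hx1, hx2, rfl⟩
    exact ⟨2*π*(x:ℝ)/n, theta_mono hx1, theta_mono hx2, rfl⟩
  · intro p hp
    rcases hT' p hp with ⟨x, hx1, hx2, rfl⟩
    refine ⟨2*π*(x:ℝ)/n, theta_mono hx1, ?_, rfl⟩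
    rw [← h2π]
    exact theta_mono hx2

/-- `T` is the triangle with vertices `u, u+i, u+s` (mod n), contained in the
arc from `u` to `u+s` with `s ≤ m` -/
def pred (n m : ℕ) (T : Finset (ℝ×ℝ)) (u i s : ℕ) : Prop :=
  u < n ∧ 0 < i ∧ i < s ∧ s ≤ m ∧
    T = ({pt n u, pt n (u+i), pt n (u+s)} : Finset (ℝ×ℝ))

/-- the triangle assigned to an avoiding triangle -/
noncomputable def phiSet (n m u i s : ℕ) : Finset (ℝ×ℝ) :=
  ({pt n u, pt n (u+s), pt n (u+m+i)} : Finset (ℝ×ℝ))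

lemma dvd_congr {n x y : ℤ} (h : n ∣ y) (e : x = y) : n ∣ x := e ▸ h

lemma no_dvd {n x : ℤ} (hn : 0 < n) (h : n ∣ x) (h1 : 0 < x) (h2 : x < n) : False := by
  have := Int.le_of_dvd h1 h; omega

lemma pt_ne {n : ℕ} (hn : 0 < n) {x y : ℕ} (hxy : x < y) (hyb : y - x < n) :
    pt n x ≠ pt n y := by
  intro h
  have hd := (pt_eq_iff hn x y).1 h
  have h2 := dvd_eq_of_bounds (n := (n:ℤ)) (by exact_mod_cast hn) hd
    (by push_cast; omega) (by push_cast; omega)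
  have : x = y := by exact_mod_cast h2
  omega

lemma phi_sub {n m u i s : ℕ} (hn : 0 < n) : phiSet n m u i s ⊆ regularNgon n := by
  intro p hp
  simp only [phiSet, Finset.mem_insert, Finset.mem_singleton] at hp
  rcases hp with rfl | rfl | rfl <;> exact pt_mem_ngon hn _

lemma phi_card {n m u i s : ℕ} (hn3 : 3 ≤ n) (hm : n = 2*m+1)
    (hi : 0 < i) (his : i < s) (hsm : s ≤ m) : (phiSet n m u i s).card = 3 := by
  have hn : 0 < n := by omega
  apply Finset.card_eq_three.2
  exact ⟨pt n u, pt n (u+s), pt n (u+m+i),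
    pt_ne hn (by omega) (by omega), pt_ne hn (by omega) (by omega),
    pt_ne hn (by omega) (by omega), rfl⟩

lemma theta_pos {n a : ℕ} (hn : 0 < n) (ha : 0 < a) : 0 < 2*π*(a:ℝ)/n := by
  have hπ := Real.pi_pos
  have h1 : (0:ℝ) < a := Nat.cast_pos.2 ha
  have h2 : (0:ℝ) < n := Nat.cast_pos.2 hn
  positivity

lemma theta_lt_pi {n a : ℕ} (hn : 0 < n) (ha : 2*a < n) : 2*π*(a:ℝ)/n < π := by
  have hπ := Real.pi_pos
  have h1 : (2*(a:ℝ)) < n := by exact_mod_cast ha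
  have h2 : (0:ℝ) < n := Nat.cast_pos.2 hn
  rw [div_lt_iff₀ h2]
  nlinarith

lemma pi_lt_theta {n a : ℕ} (hn : 0 < n) (ha : n < 2*a) : π < 2*π*(a:ℝ)/n := by
  have hπ := Real.pi_pos
  have h1 : (n:ℝ) < 2*a := by exact_mod_cast ha
  have h2 : (0:ℝ) < n := Nat.cast_pos.2 hn
  rw [lt_div_iff₀ h2]
  nlinarith

lemma theta_lt_two_pi {n a : ℕ} (hn : 0 < n) (ha : a < n) : 2*π*(a:ℝ)/n < 2*π := by
  have hπ := Real.pi_pos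
  have h1 : (a:ℝ) < n := by exact_mod_cast ha
  have h2 : (0:ℝ) < n := Nat.cast_pos.2 hn
  rw [div_lt_iff₀ h2]
  nlinarith

lemma phi_center {n m u i s : ℕ} (hn3 : 3 ≤ n) (hm : n = 2*m+1)
    (hi : 0 < i) (his : i < s) (hsm : s ≤ m) :
    ((0,0) : ℝ×ℝ) ∈ interior (convexHull ℝ ((phiSet n m u i s : Finset (ℝ×ℝ)) : Set (ℝ×ℝ))) := by
  have hn : 0 < n := by omega
  have hnR : (0:ℝ) < n := Nat.cast_pos.2 hn
  have e1 : pt n (u+s) = P (2*π*(u:ℝ)/n + 2*π*(s:ℝ)/n) := by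
    unfold pt; congr 1; push_cast; field_simp
  have e2 : pt n (u+m+i) = P (2*π*(u:ℝ)/n + 2*π*(s:ℝ)/n + 2*π*((m+i-s:ℕ):ℝ)/n) := by
    unfold pt; congr 1
    have : ((m+i-s:ℕ):ℝ) = (m:ℝ) + i - s := by
      have : s ≤ m + i := by omega
      push_cast [this]; ring
    rw [this]; push_cast; field_simp; ring
  have hcoe : ((phiSet n m u i s : Finset (ℝ×ℝ)) : Set (ℝ×ℝ))
      = {P (2*π*(u:ℝ)/n), P (2*π*(u:ℝ)/n + 2*π*(s:ℝ)/n),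
          P (2*π*(u:ℝ)/n + 2*π*(s:ℝ)/n + 2*π*((m+i-s:ℕ):ℝ)/n)} := by
    simp only [phiSet, Finset.coe_insert, Finset.coe_singleton, e1, e2]
    rfl
  rw [hcoe]
  have hsum : 2*π*(s:ℝ)/n + 2*π*((m+i-s:ℕ):ℝ)/n = 2*π*((m+i:ℕ):ℝ)/n := by
    have h1 : ((m+i-s:ℕ):ℝ) = (m:ℝ) + i - s := by
      have : s ≤ m + i := by omega
      push_cast [this]; ring
    rw [h1]; push_cast; field_simp; ring
  apply zero_mem_interior
  · exact theta_pos hn (by omega)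
  · exact theta_lt_pi hn (by omega)
  · exact theta_pos hn (by omega)
  · exact theta_lt_pi hn (by omega)
  · rw [hsum]; exact pi_lt_theta hn (by omega)
  · rw [hsum]; exact theta_lt_two_pi hn (by omega)

lemma phi_disj {n m u i s : ℕ} {T : Finset (ℝ×ℝ)} (hn3 : 3 ≤ n) (hm : n = 2*m+1)
    (hp : pred n m T u i s) :
    interior (convexHull ℝ (T : Set (ℝ×ℝ)))
      ∩ interior (convexHull ℝ ((phiSet n m u i s : Finset (ℝ×ℝ)) : Set (ℝ×ℝ))) = ∅ := by
  obtain ⟨hu, hi, his, hsm, hTeq⟩ := hp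
  have hn : 0 < n := by omega
  apply disj_of_arcs hn _ _ u s (by omega) (by omega)
  · intro p hp
    rw [hTeq] at hp
    simp only [Finset.mem_insert, Finset.mem_singleton] at hp
    rcases hp with rfl | rfl | rfl
    · exact ⟨u, le_refl u, by omega, rfl⟩
    · exact ⟨u+i, by omega, by omega, rfl⟩
    · exact ⟨u+s, by omega, by omega, rfl⟩
  · intro p hp
    simp only [phiSet, Finset.mem_insert, Finset.mem_singleton] at hp
    rcases hp with rfl | rfl | rfl
    · refine ⟨u+n, by omega, by omega, ?_⟩
      apply pt_eq_of_dvd hn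
      refine dvd_congr (dvd_neg.2 (dvd_refl ((n:ℕ):ℤ))) ?_
      push_cast; ring
    · exact ⟨u+s, by omega, by omega, rfl⟩
    · exact ⟨u+m+i, by omega, by omega, rfl⟩

lemma classify {n m : ℕ} {T : Finset (ℝ×ℝ)} (hn3 : 3 ≤ n) (hm : n = 2*m+1)
    (hsub : T ⊆ regularNgon n) (hcard : T.card = 3) :
    ((0,0) : ℝ×ℝ) ∈ interior (convexHull ℝ (T : Set (ℝ×ℝ)))
      ∨ ∃ u i s, pred n m T u i s := by
  have hn : 0 < n := by omega
  have hnR : (0:ℝ) < n := Nat.cast_pos.2 hn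
  have hreg : regularNgon n = (Finset.range n).image (pt n) := rfl
  set K := (Finset.range n).filter (fun k => pt n k ∈ T) with hK
  have hInj : Set.InjOn (pt n) (K : Set ℕ) := by
    intro j hj k hk hjk
    simp only [hK, Finset.coe_filter, Set.mem_setOf_eq, Finset.mem_range] at hj hk
    have hd := (pt_eq_iff hn j k).1 hjk
    have := dvd_eq_of_bounds (n := (n:ℤ)) (by exact_mod_cast hn) hd
      (by push_cast; omega) (by push_cast; omega)
    exact_mod_cast this
  have hTK : T = K.image (pt n) := by
    apply Finset.ext
    intro p
    constructor
    · intro hp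
      have hmem := hsub hp
      rw [hreg, Finset.mem_image] at hmem
      rcases hmem with ⟨k, hk, rfl⟩
      rw [Finset.mem_image]
      exact ⟨k, by simp [hK, Finset.mem_filter, Finset.mem_range.1 hk, hp], rfl⟩
    · intro hp
      rw [Finset.mem_image] at hp
      rcases hp with ⟨k, hk, rfl⟩
      simp only [hK, Finset.mem_filter] at hk
      exact hk.2
  have hKcard : K.card = 3 := by
    rw [hTK, Finset.card_image_of_injOn hInj] at hcard
    exact hcard
  obtain ⟨a, b, c, hab, hbc, hKeq⟩ := exists_ordered_triple K hKcard
  have hcn : c < n := by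
    have : c ∈ K := by rw [hKeq]; simp
    simp only [hK, Finset.mem_filter, Finset.mem_range] at this
    exact this.1
  have hT3 : T = ({pt n a, pt n b, pt n c} : Finset (ℝ×ℝ)) := by
    rw [hTK, hKeq]
    simp [Finset.image_insert, Finset.image_singleton]
  set p := b - a with hp
  set q := c - b with hq
  have hb' : b = a + p := by omega
  have hc' : c = a + p + q := by omega
  have hp0 : 0 < p := by omega
  have hq0 : 0 < q := by omega
  rw [hb', hc'] at hT3
  rcases (by omega : p + q ≤ m ∨ m+1 ≤ p ∨ m+1 ≤ q ∨ (p ≤ m ∧ q ≤ m ∧ m+1 ≤ p+q))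
    with hcase | hcase | hcase | hcase
  · right
    exact ⟨a, p, p+q, by omega, by omega, by omega, by omega,
      by rw [hT3, Nat.add_assoc]⟩
  · right
    refine ⟨a+p, q, n-p, by omega, by omega, by omega, by omega, ?_⟩
    rw [hT3]
    have e3 : pt n (a+p+(n-p)) = pt n a := by
      have e : a+p+(n-p) = a + 1*n := by omega
      rw [e, pt_add_mul]
    rw [e3]
    ext x
    simp only [Finset.mem_insert, Finset.mem_singleton]
    tauto
  · right
    refine ⟨a+p+q, n-p-q, n-q, by omega, by omega, by omega, by omega, ?_⟩
    rw [hT3]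
    have e1 : pt n (a+p+q+(n-p-q)) = pt n a := by
      have e : a+p+q+(n-p-q) = a + 1*n := by omega
      rw [e, pt_add_mul]
    have e2 : pt n (a+p+q+(n-q)) = pt n (a+p) := by
      have e : a+p+q+(n-q) = (a+p) + 1*n := by omega
      rw [e, pt_add_mul]
    rw [e1, e2]
    ext x
    simp only [Finset.mem_insert, Finset.mem_singleton]
    tauto
  · left
    have e1 : pt n (a+p) = P (2*π*(a:ℝ)/n + 2*π*(p:ℝ)/n) := by
      unfold pt; congr 1; push_cast; field_simp
    have e2 : pt n (a+p+q) = P (2*π*(a:ℝ)/n + 2*π*(p:ℝ)/n + 2*π*(q:ℝ)/n) := by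
      unfold pt; congr 1; push_cast; field_simp
    have hcoe : ((T : Finset (ℝ×ℝ)) : Set (ℝ×ℝ))
        = {P (2*π*(a:ℝ)/n), P (2*π*(a:ℝ)/n + 2*π*(p:ℝ)/n),
            P (2*π*(a:ℝ)/n + 2*π*(p:ℝ)/n + 2*π*(q:ℝ)/n)} := by
      rw [hT3]
      simp only [Finset.coe_insert, Finset.coe_singleton, e1, e2]
      rfl
    rw [hcoe]
    have hsum : 2*π*(p:ℝ)/n + 2*π*(q:ℝ)/n = 2*π*((p+q:ℕ):ℝ)/n := by
      push_cast; field_simp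
    apply zero_mem_interior
    · exact theta_pos hn (by omega)
    · exact theta_lt_pi hn (by omega)
    · exact theta_pos hn (by omega)
    · exact theta_lt_pi hn (by omega)
    · rw [hsum]; exact pi_lt_theta hn (by omega)
    · rw [hsum]; exact theta_lt_two_pi hn (by omega)

set_option maxHeartbeats 1600000 in
lemma fiber {n m : ℕ} {T T' : Finset (ℝ×ℝ)} {u i s u' i' s' : ℕ}
    (hn3 : 3 ≤ n) (hm : n = 2*m+1)
    (h : pred n m T u i s) (h' : pred n m T' u' i' s')
    (hS : phiSet n m u i s = phiSet n m u' i' s') :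
    T = T' ∨ interior (convexHull ℝ (T : Set (ℝ×ℝ)))
      ∩ interior (convexHull ℝ (T' : Set (ℝ×ℝ))) = ∅ := by
  obtain ⟨hu, hi, his, hsm, hTeq⟩ := h
  obtain ⟨hu', hi', his', hsm', hTeq'⟩ := h'
  have hn : 0 < n := by omega
  have hnZ : (0:ℤ) < (n:ℤ) := by exact_mod_cast hn
  -- membership of the primed generators in the unprimed phiSet
  have e1 : pt n u' ∈ phiSet n m u i s := by
    rw [hS]; simp [phiSet]
  have e2 : pt n (u'+s') ∈ phiSet n m u i s := by
    rw [hS]; simp [phiSet]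
  have e3 : pt n (u'+m+i') ∈ phiSet n m u i s := by
    rw [hS]; simp [phiSet]
  simp only [phiSet, Finset.mem_insert, Finset.mem_singleton] at e1 e2 e3
  -- helper to build the arc hypotheses for T
  have hTarc : ∀ p ∈ T, ∃ x : ℕ, u ≤ x ∧ x ≤ u + s ∧ p = pt n x := by
    intro p hp
    rw [hTeq] at hp
    simp only [Finset.mem_insert, Finset.mem_singleton] at hp
    rcases hp with rfl | rfl | rfl
    · exact ⟨u, le_refl u, by omega, rfl⟩
    · exact ⟨u+i, by omega, by omega, rfl⟩
    · exact ⟨u+s, by omega, by omega, rfl⟩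
  rcases e1 with he1 | he1 | he1
  · -- case A : u' ≡ u, hence u' = u
    have d1 := (pt_eq_iff hn u' u).1 he1
    have hu'u : u' = u := by
      have := dvd_eq_of_bounds hnZ d1 (by push_cast; omega) (by push_cast; omega)
      exact_mod_cast this
    subst hu'u
    rcases e2 with he2 | he2 | he2
    · -- u'+s' ≡ u' : impossible
      exfalso
      have d2 := (pt_eq_iff hn (u'+s') u').1 he2
      have dd : (n:ℤ) ∣ (s':ℤ) := dvd_congr d2 (by push_cast; ring)
      exact no_dvd hnZ dd (by push_cast; omega) (by push_cast; omega)
    · -- u'+s' ≡ u'+s : s' = s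
      have d2 := (pt_eq_iff hn (u'+s') (u'+s)).1 he2
      have hss : s' = s := by
        have := dvd_eq_of_bounds hnZ d2 (by push_cast; omega) (by push_cast; omega)
        omega
      subst hss
      rcases e3 with he3 | he3 | he3
      · exfalso
        have d3 := (pt_eq_iff hn (u'+m+i') u').1 he3
        have dd : (n:ℤ) ∣ ((m:ℤ) + i') := dvd_congr d3 (by push_cast; ring)
        exact no_dvd hnZ dd (by push_cast; omega) (by push_cast; omega)
      · exfalso
        have d3 := (pt_eq_iff hn (u'+m+i') (u'+s')).1 he3
        have dd : (n:ℤ) ∣ ((m:ℤ) + i' - s') := dvd_congr d3 (by push_cast; ring)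
        exact no_dvd hnZ dd (by push_cast; omega) (by push_cast; omega)
      · -- i' = i, so T = T'
        have d3 := (pt_eq_iff hn (u'+m+i') (u'+m+i)).1 he3
        have hii : i' = i := by
          have := dvd_eq_of_bounds hnZ d3 (by push_cast; omega) (by push_cast; omega)
          omega
        subst hii
        left
        rw [hTeq, hTeq']
    · -- u'+s' ≡ u'+m+i : impossible since s' ≤ m < m+i
      exfalso
      have d2 := (pt_eq_iff hn (u'+s') (u'+m+i)).1 he2
      have d2' : (n:ℤ) ∣ ((m:ℤ) + i - s') := by
        refine dvd_congr (dvd_neg.2 d2) ?_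
        push_cast; ring
      exact no_dvd hnZ d2' (by push_cast; omega) (by push_cast; omega)
  · -- case B : u' ≡ u + s
    have d1 := (pt_eq_iff hn u' (u+s)).1 he1
    rcases e2 with he2 | he2 | he2
    · -- u'+s' ≡ u : combined n ∣ s+s' : impossible
      exfalso
      have d2 := (pt_eq_iff hn (u'+s') u).1 he2
      have dd : (n:ℤ) ∣ ((s':ℤ) + s) := by
        refine dvd_congr (dvd_sub d2 d1) ?_
        push_cast; ring
      exact no_dvd hnZ dd (by push_cast; omega) (by push_cast; omega)
    · -- u'+s' ≡ u+s : n ∣ s' : impossible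
      exfalso
      have d2 := (pt_eq_iff hn (u'+s') (u+s)).1 he2
      have dd : (n:ℤ) ∣ (s':ℤ) := by
        refine dvd_congr (dvd_sub d2 d1) ?_
        push_cast; ring
      exact no_dvd hnZ dd (by push_cast; omega) (by push_cast; omega)
    · -- u'+s' ≡ u+m+i : s' = m+i-s, T' sits on the arc [u+s, u+m+i]
      have d2 := (pt_eq_iff hn (u'+s') (u+m+i)).1 he2
      have dd : (n:ℤ) ∣ ((s':ℤ) - ((m:ℤ) + i - s)) := by
        refine dvd_congr (dvd_sub d2 d1) ?_
        push_cast; ring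
      have hs'value : (s':ℤ) = (m:ℤ) + i - s := by
        have := dvd_eq_of_bounds hnZ dd (by push_cast; omega) (by push_cast; omega)
        omega
      have hs'n : s' = m + i - s := by omega
      right
      apply disj_of_arcs hn _ _ u s (by omega) (by omega) hTarc
      intro p hp
      rw [hTeq'] at hp
      simp only [Finset.mem_insert, Finset.mem_singleton] at hp
      rcases hp with rfl | rfl | rfl
      · exact ⟨u+s, le_refl _, by omega, pt_eq_of_dvd hn (dvd_congr d1 (by push_cast; ring))⟩
      · refine ⟨u+s+i', by omega, by omega, ?_⟩
        exact pt_eq_of_dvd hn (dvd_congr d1 (by push_cast; ring))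
      · refine ⟨u+m+i, by omega, by omega, ?_⟩
        exact pt_eq_of_dvd hn (dvd_congr d2 (by push_cast; ring))
  · -- case C : u' ≡ u + m + i
    have d1 := (pt_eq_iff hn u' (u+m+i)).1 he1
    rcases e2 with he2 | he2 | he2
    · -- u'+s' ≡ u : n ∣ s'+m+i, so s'+m+i = n, s' = m+1-i
      have d2 := (pt_eq_iff hn (u'+s') u).1 he2
      have dd : (n:ℤ) ∣ ((s':ℤ) + m + i) := by
        refine dvd_congr (dvd_sub d2 d1) ?_
        push_cast; ring
      have hsval : (s':ℤ) + m + i = n := by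
        exact dvd_eq_n_of_bounds hnZ dd (by push_cast; omega) (by push_cast; omega)
      have hs'n : s' = m + 1 - i := by omega
      right
      apply disj_of_arcs hn _ _ u s (by omega) (by omega) hTarc
      intro p hp
      rw [hTeq'] at hp
      simp only [Finset.mem_insert, Finset.mem_singleton] at hp
      rcases hp with rfl | rfl | rfl
      · refine ⟨u+m+i, by omega, by omega, ?_⟩
        exact pt_eq_of_dvd hn (dvd_congr d1 (by push_cast; ring))
      · refine ⟨u+m+i+i', by omega, by omega, ?_⟩
        exact pt_eq_of_dvd hn (dvd_congr d1 (by push_cast; ring))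
      · refine ⟨u+n, by omega, by omega, ?_⟩
        have ddn : (n:ℤ) ∣ (((u'+s':ℕ):ℤ) - ((u+n:ℕ):ℤ)) := by
          refine dvd_congr (dvd_sub d2 (dvd_refl ((n:ℕ):ℤ))) ?_
          push_cast; ring
        exact pt_eq_of_dvd hn ddn
    · -- u'+s' ≡ u+s : n ∣ s'+m+i-s : impossible
      exfalso
      have d2 := (pt_eq_iff hn (u'+s') (u+s)).1 he2
      have dd : (n:ℤ) ∣ ((s':ℤ) + m + i - s) := by
        refine dvd_congr (dvd_sub d2 d1) ?_
        push_cast; ring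
      exact no_dvd hnZ dd (by push_cast; omega) (by push_cast; omega)
    · -- u'+s' ≡ u+m+i : n ∣ s' : impossible
      exfalso
      have d2 := (pt_eq_iff hn (u'+s') (u+m+i)).1 he2
      have dd : (n:ℤ) ∣ (s':ℤ) := by
        refine dvd_congr (dvd_sub d2 d1) ?_
        push_cast; ring
      exact no_dvd hnZ dd (by push_cast; omega) (by push_cast; omega)


open Classical in
noncomputable def Phi (n m : ℕ) (T : Finset (ℝ×ℝ)) : Finset (ℝ×ℝ) :=
  if ((0,0) : ℝ×ℝ) ∈ interior (convexHull ℝ (T : Set (ℝ×ℝ))) then T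
  else if h : ∃ u i s, pred n m T u i s then
    phiSet n m h.choose h.choose_spec.choose h.choose_spec.choose_spec.choose
  else T

open Classical in
lemma Phi_center {n m : ℕ} {T : Finset (ℝ×ℝ)}
    (hc : ((0,0) : ℝ×ℝ) ∈ interior (convexHull ℝ (T : Set (ℝ×ℝ)))) :
    Phi n m T = T := by
  rw [Phi, if_pos hc]

open Classical in
lemma Phi_avoid {n m : ℕ} {T : Finset (ℝ×ℝ)}
    (hc : ¬ ((0,0) : ℝ×ℝ) ∈ interior (convexHull ℝ (T : Set (ℝ×ℝ))))
    (hex : ∃ u i s, pred n m T u i s) :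
    ∃ u i s, pred n m T u i s ∧ Phi n m T = phiSet n m u i s := by
  refine ⟨hex.choose, hex.choose_spec.choose, hex.choose_spec.choose_spec.choose,
    hex.choose_spec.choose_spec.choose_spec, ?_⟩
  rw [Phi, if_neg hc, dif_pos hex]

end NgonProofAux

open NgonProofAux in
theorem max_intersecting_family_regular_ngon (n : ℕ) (hn : 3 ≤ n) (hodd : Odd n)
    (𝓕 : Finset (Finset (ℝ × ℝ)))
    (h𝓕 : ∀ T ∈ 𝓕, T ⊆ regularNgon n ∧ T.card = 3)
    (hint : ∀ T₁ ∈ 𝓕, ∀ T₂ ∈ 𝓕,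
      (interior (convexHull ℝ (T₁ : Set (ℝ × ℝ))) ∩
        interior (convexHull ℝ (T₂ : Set (ℝ × ℝ)))).Nonempty) :
    𝓕.card ≤
      Set.ncard {T : Finset (ℝ × ℝ) | T ⊆ regularNgon n ∧ T.card = 3 ∧
        ((0, 0) : ℝ × ℝ) ∈ interior (convexHull ℝ (T : Set (ℝ × ℝ)))} := by
  obtain ⟨m, hm⟩ := hodd
  have hm' : n = 2*m+1 := by omega
  have hn0 : 0 < n := by omega
  set Sset := {T : Finset (ℝ × ℝ) | T ⊆ regularNgon n ∧ T.card = 3 ∧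
    ((0, 0) : ℝ × ℝ) ∈ interior (convexHull ℝ (T : Set (ℝ × ℝ)))} with hSset
  have hfin : Sset.Finite := by
    apply Set.Finite.subset (Finset.finite_toSet (regularNgon n).powerset)
    intro T hT
    simp only [Finset.coe_powerset, Set.mem_preimage, Set.mem_powerset_iff,
      Finset.coe_subset]
    exact hT.1
  have himg : (Phi n m) '' (↑𝓕 : Set (Finset (ℝ×ℝ))) ⊆ Sset := by
    rintro S ⟨T, hT, rfl⟩
    have hT' := h𝓕 T hT
    by_cases hc : ((0,0) : ℝ×ℝ) ∈ interior (convexHull ℝ (T : Set (ℝ × ℝ)))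
    · rw [Phi_center hc]
      exact ⟨hT'.1, hT'.2, hc⟩
    · have hex := (classify hn hm' hT'.1 hT'.2).resolve_left hc
      obtain ⟨u, i, s, hpred, hPhi⟩ := Phi_avoid hc hex
      rw [hPhi]
      exact ⟨phi_sub hn0, phi_card hn hm' hpred.2.1 hpred.2.2.1 hpred.2.2.2.1,
        phi_center hn hm' hpred.2.1 hpred.2.2.1 hpred.2.2.2.1⟩
  have hinj : Set.InjOn (Phi n m) (↑𝓕 : Set (Finset (ℝ×ℝ))) := by
    intro T hT T' hT' hEq
    by_contra hne
    have hTmem : T ∈ 𝓕 := hT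
    have hT'mem : T' ∈ 𝓕 := hT'
    have hint' := hint T hTmem T' hT'mem
    by_cases hc : ((0,0) : ℝ×ℝ) ∈ interior (convexHull ℝ (T : Set (ℝ × ℝ))) <;>
      by_cases hc' : ((0,0) : ℝ×ℝ) ∈ interior (convexHull ℝ (T' : Set (ℝ × ℝ)))
    · rw [Phi_center hc, Phi_center hc'] at hEq
      exact hne hEq
    · have hex' := (classify hn hm' (h𝓕 T' hT'mem).1 (h𝓕 T' hT'mem).2).resolve_left hc'
      obtain ⟨u, i, s, hpred, hPhi⟩ := Phi_avoid hc' hex'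
      rw [Phi_center hc, hPhi] at hEq
      have hdisj := phi_disj hn hm' hpred
      rw [← hEq] at hdisj
      have hne' := hint T' hT'mem T hTmem
      rw [hdisj] at hne'
      exact Set.not_nonempty_empty hne' 
    · have hex := (classify hn hm' (h𝓕 T hTmem).1 (h𝓕 T hTmem).2).resolve_left hc
      obtain ⟨u, i, s, hpred, hPhi⟩ := Phi_avoid hc hex
      rw [Phi_center hc', hPhi] at hEq
      have hdisj := phi_disj hn hm' hpred
      rw [hEq] at hdisj
      rw [hdisj] at hint'
      exact Set.not_nonempty_empty hint'
    · have hex := (classify hn hm' (h𝓕 T hTmem).1 (h𝓕 T hTmem).2).resolve_left hc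
      have hex' := (classify hn hm' (h𝓕 T' hT'mem).1 (h𝓕 T' hT'mem).2).resolve_left hc'
      obtain ⟨u, i, s, hpred, hPhi⟩ := Phi_avoid hc hex
      obtain ⟨u', i', s', hpred', hPhi'⟩ := Phi_avoid hc' hex'
      rw [hPhi, hPhi'] at hEq
      rcases fiber hn hm' hpred hpred' hEq with h | h
      · exact hne h
      · rw [h] at hint'
        exact Set.not_nonempty_empty hint'
  calc 𝓕.card = (↑𝓕 : Set (Finset (ℝ×ℝ))).ncard := (Set.ncard_coe_finset _).symm
    _ = ((Phi n m) '' (↑𝓕 : Set (Finset (ℝ×ℝ)))).ncard :=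
        (Set.ncard_image_of_injOn hinj).symm
    _ ≤ Sset.ncard := Set.ncard_le_ncard himg hfin
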